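/- arXiv:1403.0483 — 5 statements merged into one kernel-verified Lean document; each statement's English description precedes it below -/
import Mathlib

section
/- For nonnegative integers $i \le n$ and any $x$ not in $\{0,-1,\dots,-n\}$, $\sum_{k=0}^{n} \frac{(-n)_k}{k!} \binom{n-i+k}{n-i} \frac{1}{x+k} = \frac{n!\,(1-x)_{n-i}}{(n-i)!\,(x)_{n+1}}$. -/
open Finset

/-- Pochhammer symbol `(x)_k = x (x+1) ⋯ (x+k-1)`. -/
noncomputable def poch (x : ℝ) (k : ℕ) : ℝ := (ascPochhammer ℝ k).eval x

open Polynomial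

lemma poch_eq_prod (x : ℝ) (m : ℕ) : poch x m = ∏ j ∈ range m, (x + j) := by
  induction m with
  | zero => simp [poch]
  | succ m ih => rw [poch, ascPochhammer_succ_eval, ← poch, ih, prod_range_succ]

lemma pochA (n k : ℕ) (hk : k ≤ n) :
    poch (-(n : ℝ)) k = (-1)^k * (n.choose k) * (k.factorial : ℝ) := by
  rw [poch_eq_prod]
  have h1 : ∀ j ∈ range k, (-(n:ℝ) + j) = -1 * (((n - j : ℕ)) : ℝ) := by
    intro j hj
    have hj' : j ≤ n := le_trans (le_of_lt (mem_range.mp hj)) hk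
    push_cast [Nat.cast_sub hj']
    ring
  rw [prod_congr rfl h1, prod_mul_distrib, prod_const, card_range,
    ← Nat.cast_prod, ← Nat.descFactorial_eq_prod_range,
    Nat.descFactorial_eq_factorial_mul_choose]
  push_cast
  ring

lemma prod_shift (a T : ℕ) : a.factorial * ∏ m ∈ range T, (a+1+m) = (a+T).factorial := by
  induction T with
  | zero => simp
  | succ T ih =>
      rw [prod_range_succ, ← mul_assoc, ih, show a + (T+1) = (a+T)+1 from rfl,
        Nat.factorial_succ]
      ring

lemma erase_split (n j : ℕ) (hj : j < n + 1) :
    (range (n+1)).erase j = range j ∪ Ico (j+1) (n+1) := by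
  ext m
  simp only [mem_erase, mem_range, mem_union, mem_Ico]
  omega

lemma prod_erase_eval (n j : ℕ) (hj : j < n + 1) :
    ∏ m ∈ (range (n+1)).erase j, ((m:ℝ) - j)
      = (-1)^j * (j.factorial : ℝ) * ((n-j).factorial : ℝ) := by
  rw [erase_split n j hj, prod_union (by
    simp only [disjoint_left, mem_range, mem_Ico]; omega)]
  have h1 : ∏ m ∈ range j, ((m:ℝ) - j) = (-1)^j * (j.factorial : ℝ) := by
    have : ∀ m ∈ range j, ((m:ℝ) - j) = -1 * (((j - m : ℕ)):ℝ) := by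
      intro m hm
      have : m ≤ j := le_of_lt (mem_range.mp hm)
      push_cast [Nat.cast_sub this]; ring
    rw [prod_congr rfl this, prod_mul_distrib, prod_const, card_range,
      ← Nat.cast_prod, ← Nat.descFactorial_eq_prod_range, Nat.descFactorial_self]
  have h2 : ∏ m ∈ Ico (j+1) (n+1), ((m:ℝ) - j) = ((n-j).factorial : ℝ) := by
    rw [prod_Ico_eq_prod_range]
    have : ∀ t ∈ range (n+1-(j+1)), (((j+1+t:ℕ):ℝ) - j) = (((t+1:ℕ)):ℝ) := by
      intro t _; push_cast; ring
    rw [prod_congr rfl this, ← Nat.cast_prod, prod_range_add_one_eq_factorial]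
    congr 2
    omega
  rw [h1, h2]

lemma key (n T : ℕ) (hT : T ≤ n) :
    (∑ k ∈ range (n+1), C ((-1:ℝ)^k * (n.choose k) * ((T+k).choose T)) *
        ∏ j ∈ (range (n+1)).erase k, (X + C (j:ℝ)))
      = C ((n.factorial : ℝ) / T.factorial) * ∏ m ∈ range T, (C ((m:ℝ)+1) - X) := by
  rw [← sub_eq_zero]
  set lhs := ∑ k ∈ range (n+1), C ((-1:ℝ)^k * (n.choose k) * ((T+k).choose T)) *
        ∏ j ∈ (range (n+1)).erase k, (X + C (j:ℝ)) with hlhs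
  set rhs := C ((n.factorial : ℝ) / T.factorial) * ∏ m ∈ range T, (C ((m:ℝ)+1) - X) with hrhs
  apply Polynomial.eq_zero_of_natDegree_lt_card_of_eval_eq_zero'
    (lhs - rhs) ((range (n+1)).image (fun j : ℕ => -(j:ℝ)))
  · rintro y hy
    simp only [mem_image, mem_range] at hy
    obtain ⟨j, hj, rfl⟩ := hy
    have hevL : lhs.eval (-(j:ℝ)) =
        (-1:ℝ)^j * (n.choose j) * ((T+j).choose T) * ∏ m ∈ (range (n+1)).erase j, ((m:ℝ) - j) := by
      rw [hlhs, eval_finset_sum]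
      rw [Finset.sum_eq_single j]
      · rw [eval_mul, eval_C, eval_prod]
        congr 1
        apply prod_congr rfl
        intro m _; simp only [eval_add, eval_X, eval_C, eval_sub]; ring
      · intro k hk hkj
        rw [eval_mul, eval_prod]
        have : ∃ m ∈ (range (n+1)).erase k, eval (-(j:ℝ)) (X + C (m:ℝ)) = 0 := by
          refine ⟨j, mem_erase.mpr ⟨Ne.symm hkj, mem_range.mpr hj⟩, by simp⟩
        obtain ⟨m, hm, h0⟩ := this
        rw [prod_eq_zero hm h0, mul_zero]
      · intro h; exact absurd (mem_range.mpr hj) h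
    have hevR : rhs.eval (-(j:ℝ)) =
        ((n.factorial : ℝ) / T.factorial) * ∏ m ∈ range T, ((m:ℝ) + 1 + j) := by
      rw [hrhs, eval_mul, eval_C, eval_prod]
      congr 1
      apply prod_congr rfl
      intro m _; simp only [eval_add, eval_X, eval_C, eval_sub]; ring
    rw [eval_sub, hevL, hevR, prod_erase_eval n j hj, sub_eq_zero]
    have hprod : (∏ m ∈ range T, ((m:ℝ) + 1 + j)) * (j.factorial : ℝ)
        = (((T+j).factorial : ℕ) : ℝ) := by
      have h := prod_shift j T
      have h2 : (∏ m ∈ range T, ((m:ℝ) + 1 + j)) = ((∏ m ∈ range T, (j+1+m) : ℕ) : ℝ) := by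
        push_cast
        exact prod_congr rfl (fun m _ => by ring)
      rw [h2, ← Nat.cast_mul, mul_comm, h, Nat.add_comm]
    have hc1 : n.choose j * j.factorial * (n-j).factorial = n.factorial :=
      Nat.choose_mul_factorial_mul_factorial (by omega)
    have hc2 : (T+j).choose T * T.factorial * j.factorial = (T+j).factorial := by
      rw [Nat.choose_symm_add]
      exact Nat.add_choose_mul_factorial_mul_factorial T j
    have hj0 : (j.factorial : ℝ) ≠ 0 := by exact_mod_cast j.factorial_ne_zero
    have hT0 : (T.factorial : ℝ) ≠ 0 := by exact_mod_cast T.factorial_ne_zero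
    have hc1' : ((n.choose j) : ℝ) * j.factorial * (n-j).factorial = n.factorial := by
      exact_mod_cast congrArg (Nat.cast : ℕ → ℝ) hc1
    have hc2' : (((T+j).choose T) : ℝ) * T.factorial * j.factorial = ((T+j).factorial : ℝ) := by
      exact_mod_cast congrArg (Nat.cast : ℕ → ℝ) hc2
    have hsq : ((-1:ℝ)^j) * ((-1:ℝ)^j) = 1 := by
      rw [← pow_add]
      exact Even.neg_one_pow ⟨j, rfl⟩
    rw [div_mul_eq_mul_div, eq_div_iff hT0] at *
    apply mul_right_cancel₀ hj0
    rw [mul_assoc (↑n.factorial : ℝ), hprod]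
    linear_combination (((n.choose j):ℝ)*(((T+j).choose T):ℝ)*(j.factorial:ℝ)*(((n-j).factorial):ℝ)*(T.factorial:ℝ)*(j.factorial:ℝ)) * hsq
      + ((((T+j).choose T):ℝ)*(T.factorial:ℝ)*(j.factorial:ℝ)) * hc1'
      + ((n.factorial:ℝ)) * hc2'
  · rw [card_image_of_injective _ (fun a b h => Nat.cast_injective (neg_injective h)), card_range]
    have h1 : lhs.natDegree ≤ n := by
      apply natDegree_sum_le_of_forall_le
      intro k hk
      apply le_trans (natDegree_C_mul_le _ _)
      apply le_trans (natDegree_prod_le _ _)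
      have : ∀ j ∈ (range (n+1)).erase k, (X + C (j:ℝ)).natDegree ≤ 1 := by
        intro j _
        rw [natDegree_X_add_C]
      apply le_trans (Finset.sum_le_card_nsmul _ _ 1 this)
      rw [card_erase_of_mem hk, card_range]
      simp
    have h2 : rhs.natDegree ≤ n := by
      rw [hrhs]
      apply le_trans (natDegree_C_mul_le _ _)
      apply le_trans (natDegree_prod_le _ _)
      have : ∀ m ∈ range T, (C ((m:ℝ)+1) - X).natDegree ≤ 1 := by
        intro m _
        apply le_trans (natDegree_sub_le _ _)
        rw [natDegree_C, natDegree_X]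
        omega
      apply le_trans (Finset.sum_le_card_nsmul _ _ 1 this)
      rw [card_range]
      simpa using hT
    have := natDegree_sub_le lhs rhs
    omega

theorem stmt_0 (n i : ℕ) (hi : i ≤ n) (x : ℝ) (hx : ∀ k : ℕ, k ≤ n → x + k ≠ 0) :
    ∑ k ∈ Finset.range (n + 1),
      poch (-(n : ℝ)) k / (k.factorial : ℝ) * ((n - i + k).choose (n - i) : ℝ) * (1 / (x + k))
    = (n.factorial : ℝ) * poch (1 - x) (n - i) /
        (((n - i).factorial : ℝ) * poch x (n + 1)) := by
  have hT : n - i ≤ n := Nat.sub_le n i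
  have hP : ∀ j ∈ range (n+1), x + (j:ℝ) ≠ 0 := by
    intro j hj; exact hx j (Nat.lt_succ_iff.mp (mem_range.mp hj))
  have hPne : (∏ j ∈ range (n+1), (x + (j:ℝ))) ≠ 0 := prod_ne_zero_iff.mpr hP
  have hkey := congrArg (Polynomial.eval x) (key n (n-i) hT)
  simp only [eval_finset_sum, eval_mul, eval_C, eval_prod, eval_add, eval_X, eval_sub] at hkey
  have hstep : ∀ k ∈ range (n+1),
      poch (-(n : ℝ)) k / (k.factorial : ℝ) * ((n - i + k).choose (n - i) : ℝ) * (1 / (x + k))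
      = ((-1:ℝ)^k * (n.choose k) * (((n-i)+k).choose (n-i)) *
          ∏ j ∈ (range (n+1)).erase k, (x + (j:ℝ))) / ∏ j ∈ range (n+1), (x + (j:ℝ)) := by
    intro k hk
    have hk' : k ≤ n := Nat.lt_succ_iff.mp (mem_range.mp hk)
    rw [pochA n k hk']
    have hkf : (k.factorial : ℝ) ≠ 0 := by exact_mod_cast k.factorial_ne_zero
    have hmul := Finset.mul_prod_erase (range (n+1)) (fun j => x + (j:ℝ)) hk
    have hxk := hx k hk'
    field_simp
    rw [← hmul]
    ring
  rw [sum_congr rfl hstep, ← sum_div, hkey]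
  have hpp : ∏ m ∈ range (n-i), ((m:ℝ) + 1 - x) = poch (1-x) (n-i) := by
    rw [poch_eq_prod]
    exact prod_congr rfl fun m _ => by ring
  rw [hpp, poch_eq_prod x (n+1)]
  have hTf : ((n-i).factorial : ℝ) ≠ 0 := by exact_mod_cast (n-i).factorial_ne_zero
  field_simp
end

section
/- Let $n, i, l$ be integers with $l \ge -1$, $0 \le i$, and $i + l < n$. Then for any polynomial $p$ of degree at most $i+l$, $\sum_{k=0}^{n} \frac{(-n)_k (n-i+1)_k}{(1)_k (l+2)_k} p(k) = 0$. -/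
open Finset

open Polynomial

lemma fwdDiff_poly_eval (q : Polynomial ℝ) :
    fwdDiff 1 (fun x : ℝ => q.eval x) = fun x : ℝ => (q.comp (X + 1) - q).eval x := by
  funext x
  simp [fwdDiff, eval_comp, add_comm]

lemma degree_comp_sub_lt (q : Polynomial ℝ) : (q.comp (X + 1) - q).degree < q.degree ∨
    q.comp (X + 1) - q = 0 := by
  rcases eq_or_ne q 0 with rfl | hq
  · right; simp
  rcases Nat.eq_zero_or_pos q.natDegree with h0 | hpos
  · right
    rw [Polynomial.eq_C_of_natDegree_eq_zero h0]
    simp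
  · left
    have hX1 : (X + 1 : Polynomial ℝ) = X + C 1 := by simp
    have hn1 : (X + 1 : Polynomial ℝ).natDegree = 1 := by rw [hX1]; exact natDegree_X_add_C 1
    have hlc : (q.comp (X + 1)).leadingCoeff = q.leadingCoeff := by
      rw [Polynomial.leadingCoeff_comp (by rw [hn1]; exact one_ne_zero)]
      rw [hX1, (monic_X_add_C (1:ℝ)).leadingCoeff]
      simp
    have hc0 : q.comp (X + 1) ≠ 0 := by
      intro h
      apply hq
      rw [← leadingCoeff_eq_zero, ← hlc, h, leadingCoeff_zero]
    have hdeg : (q.comp (X + 1)).degree = q.degree := by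
      rw [degree_eq_natDegree hc0, degree_eq_natDegree hq, natDegree_comp, hn1, mul_one]
    have := degree_sub_lt hdeg hc0 hlc
    rwa [hdeg] at this

lemma fwdDiff_iter_poly_zero : ∀ (n : ℕ) (q : Polynomial ℝ), q.degree < n →
    (fwdDiff 1)^[n] (fun x : ℝ => q.eval x) = 0 := by
  intro n
  induction n with
  | zero =>
    intro q hq
    have : q = 0 := Polynomial.degree_eq_bot.mp (Nat.WithBot.lt_zero_iff.mp (by simpa using hq))
    subst this
    funext x; simp
  | succ n ih =>
    intro q hq
    rw [Function.iterate_succ_apply, fwdDiff_poly_eval]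
    apply ih
    rcases degree_comp_sub_lt q with h | h
    · calc (q.comp (X + 1) - q).degree < q.degree := h
        _ ≤ n := by
          rw [Polynomial.degree_le_iff_coeff_zero]
          intro m hm
          have hnm : n < m := by exact_mod_cast hm
          exact (Polynomial.degree_lt_iff_coeff_zero q (n+1)).mp (by exact_mod_cast hq) m hnm
    · rw [h, Polynomial.degree_zero]
      exact WithBot.bot_lt_coe n

lemma alt_sum_zero (n : ℕ) (q : Polynomial ℝ) (hq : q.degree < n) :
    ∑ k ∈ Finset.range (n + 1), (-1 : ℝ)^k * (n.choose k : ℝ) * q.eval (k : ℝ) = 0 := by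
  have h0 := fwdDiff_iter_eq_sum_shift (1 : ℝ) (fun x : ℝ => q.eval x) n 0
  rw [fwdDiff_iter_poly_zero n q hq] at h0
  simp only [Pi.zero_apply] at h0
  have key : ∑ k ∈ Finset.range (n + 1), (-1 : ℝ)^k * (n.choose k : ℝ) * q.eval (k : ℝ)
      = (-1 : ℝ)^n * ∑ k ∈ Finset.range (n + 1),
        ((-1 : ℤ)^(n - k) * (n.choose k : ℤ)) • ((fun x : ℝ => q.eval x) (0 + k • (1 : ℝ))) := by
    rw [Finset.mul_sum]
    apply Finset.sum_congr rfl
    intro k hk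
    have hkn : k ≤ n := Nat.lt_succ_iff.mp (Finset.mem_range.mp hk)
    have hpow : (-1 : ℝ)^n * (-1 : ℝ)^(n - k) = (-1 : ℝ)^k := by
      rw [← pow_add]
      have : n + (n - k) = 2 * (n - k) + k := by omega
      rw [this, pow_add, pow_mul]
      simp
    simp only [zsmul_eq_mul, Int.cast_mul, Int.cast_pow, Int.cast_neg, Int.cast_one,
      Int.cast_natCast, zero_add, nsmul_eq_mul, mul_one]
    rw [← mul_assoc, ← mul_assoc, hpow]
  rw [key, ← h0, mul_zero]

lemma poch_mul (x : ℝ) (a b : ℕ) : poch x (a + b) = poch x a * poch (x + a) b := by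
  have := congrArg (Polynomial.eval x) (ascPochhammer_mul (S := ℝ) a b)
  simp only [eval_mul, eval_comp, eval_add, eval_X, eval_natCast] at this
  exact this.symm

theorem stmt_2 (n i : ℕ) (l : ℤ) (hl : -1 ≤ l) (hn : (i : ℤ) + l < n)
    (p : Polynomial ℝ) (hp : ∀ k : ℕ, (i : ℤ) + l < k → p.coeff k = 0) :
    ∑ k ∈ Finset.range (n + 1),
      poch (-(n : ℝ)) k * poch ((n : ℝ) - i + 1) k /
        (poch 1 k * poch ((l : ℝ) + 2) k) * p.eval (k : ℝ) = 0 := by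
  set m : ℕ := (l + 1).toNat with hm
  have hml : (m : ℤ) = l + 1 := Int.toNat_of_nonneg (by linarith)
  have him : i + m ≤ n := by omega
  set d : ℕ := n - i - m with hd
  have hdn : d + (i + m) = n := by omega
  have hc2 : (l : ℝ) + 2 = (m : ℝ) + 1 := by
    have h : ((m : ℕ) : ℝ) = (l : ℝ) + 1 := by exact_mod_cast hml
    linarith
  set c : ℝ := (m : ℝ) + 1 with hcdef
  have hcpos : 0 < c := by positivity
  have hcd : 0 < poch c d := ascPochhammer_pos d c hcpos
  -- the auxiliary polynomial
  set q : Polynomial ℝ :=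
    Polynomial.C (1 / poch c d) * ((ascPochhammer ℝ d).comp (X + Polynomial.C c)) * p with hqdef
  -- degree bound
  have hpdeg : p.degree < ((i + m : ℕ) : WithBot ℕ) := by
    rw [Polynomial.degree_lt_iff_coeff_zero]
    intro k hk
    apply hp
    have : i + m ≤ k := hk
    omega
  have hqdeg : q.degree < (n : WithBot ℕ) := by
    have h1 : q.degree ≤ ((ascPochhammer ℝ d).comp (X + Polynomial.C c)).degree + p.degree := by
      calc q.degree ≤ (Polynomial.C (1 / poch c d)).degree +
            (((ascPochhammer ℝ d).comp (X + Polynomial.C c)) * p).degree := by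
              rw [hqdef, mul_assoc]; exact Polynomial.degree_mul_le _ _
        _ ≤ 0 + (((ascPochhammer ℝ d).comp (X + Polynomial.C c)) * p).degree := by
              gcongr; exact Polynomial.degree_C_le
        _ = (((ascPochhammer ℝ d).comp (X + Polynomial.C c)) * p).degree := by rw [zero_add]
        _ ≤ _ := Polynomial.degree_mul_le _ _
    have h2 : ((ascPochhammer ℝ d).comp (X + Polynomial.C c)).degree ≤ (d : WithBot ℕ) := by
      refine le_trans (Polynomial.degree_le_natDegree) ?_
      have := Polynomial.natDegree_comp_le (p := ascPochhammer ℝ d) (q := X + Polynomial.C c)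
      rw [Polynomial.natDegree_X_add_C, mul_one, ascPochhammer_natDegree] at this
      exact_mod_cast this
    calc q.degree ≤ (d : WithBot ℕ) + p.degree := le_trans h1 (by gcongr)
      _ < (d : WithBot ℕ) + ((i + m : ℕ) : WithBot ℕ) :=
          WithBot.add_lt_add_left (by exact_mod_cast WithBot.coe_ne_bot) hpdeg
      _ = (n : WithBot ℕ) := by rw [← Nat.cast_add, hdn]
  -- termwise identity
  have hterm : ∀ k ∈ Finset.range (n + 1),
      poch (-(n : ℝ)) k * poch ((n : ℝ) - i + 1) k /
        (poch 1 k * poch ((l : ℝ) + 2) k) * p.eval (k : ℝ)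
      = (-1 : ℝ)^k * (n.choose k : ℝ) * q.eval (k : ℝ) := by
    intro k hk
    have hkn : k ≤ n := Nat.lt_succ_iff.mp (Finset.mem_range.mp hk)
    have h1 : poch (-(n : ℝ)) k = (-1 : ℝ)^k * (n.descFactorial k : ℝ) := by
      rw [poch, ascPochhammer_eval_neg_eq_descPochhammer,
        descPochhammer_eval_eq_descFactorial]
    have h2 : poch 1 k = (k.factorial : ℝ) := ascPochhammer_eval_one ℝ k
    have h3 : (n : ℝ) - i + 1 = c + (d : ℝ) := by
      have hh : ((n : ℕ) : ℝ) = ((d + (i + m) : ℕ) : ℝ) := by exact_mod_cast hdn.symm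
      push_cast at hh
      rw [hcdef]
      linarith
    have hE2 : poch c (d + k) = poch c d * poch (c + d) k := poch_mul c d k
    have hE1 : poch c (d + k) = poch c k * poch (c + k) d := by
      rw [Nat.add_comm]; exact poch_mul c k d
    have hck : 0 < poch c k := ascPochhammer_pos k c hcpos
    have hfac : (n.descFactorial k : ℝ) = (k.factorial : ℝ) * (n.choose k : ℝ) := by
      exact_mod_cast congrArg (Nat.cast : ℕ → ℝ) (Nat.descFactorial_eq_factorial_mul_choose n k)
    have hqe : q.eval (k : ℝ) = (1 / poch c d) * poch (c + k) d * p.eval (k : ℝ) := by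
      rw [hqdef]
      simp only [eval_mul, eval_C, eval_comp, eval_add, eval_X, poch]
      rw [add_comm (k : ℝ) c]
    have hC2 : poch (c + d) k = poch c k * poch (c + k) d / poch c d := by
      field_simp
      rw [mul_comm, ← hE2, hE1]
    rw [hc2, h1, h2, h3, hC2, hqe, hfac]
    have hkf : (k.factorial : ℝ) ≠ 0 := by positivity
    field_simp [hck.ne', hcd.ne']
  rw [Finset.sum_congr rfl hterm]
  exact alt_sum_zero n q hqdeg
end

section
/- For nonnegative integers $r \le i+l$ with $l \ge -1$ and $i+l < n$, one has $\sum_{k=0}^{n} \frac{(-n)_k (n-i+1)_k}{(1)_k (l+2)_k}\, k(k-1)\cdots(k-r+1) = 0$. -/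
open Finset Polynomial

/-- Alternating binomial sum of a polynomial of degree `< n` vanishes. -/
lemma alt_sum_poly (n : ℕ) : ∀ P : Polynomial ℝ, P.degree < (n : ℕ) →
    ∑ k ∈ Finset.range (n + 1), (-1 : ℝ) ^ k * (n.choose k) * P.eval (k : ℝ) = 0 := by
  induction n with
  | zero =>
    intro P hP
    have h0 : P = 0 := by
      rw [← Polynomial.degree_eq_bot]
      exact Nat.WithBot.lt_zero_iff.mp (by exact_mod_cast hP)
    simp [h0]
  | succ n ih =>
    intro P hP
    by_cases hP0 : P = 0
    · simp [hP0]
    set Q : Polynomial ℝ := P.comp (X + 1) - P with hQdef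
    have hnd1 : (X + 1 : Polynomial ℝ).natDegree = 1 := by
      simpa using natDegree_X_add_C (1 : ℝ)
    have hlc1 : (X + 1 : Polynomial ℝ).leadingCoeff = 1 := by
      simpa using leadingCoeff_X_add_C (1 : ℝ)
    have hcompnd : (P.comp (X + 1)).natDegree = P.natDegree := by
      rw [Polynomial.natDegree_comp, hnd1, mul_one]
    have hcomplc : (P.comp (X + 1)).leadingCoeff = P.leadingCoeff := by
      rw [Polynomial.leadingCoeff_comp (by rw [hnd1]; exact one_ne_zero), hlc1, one_pow, mul_one]
    have hcomp0 : P.comp (X + 1) ≠ 0 := by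
      intro h
      apply hP0
      apply Polynomial.leadingCoeff_eq_zero.mp
      rw [← hcomplc, h, leadingCoeff_zero]
    have hdegeq : (P.comp (X + 1)).degree = P.degree := by
      rw [Polynomial.degree_eq_natDegree hcomp0, Polynomial.degree_eq_natDegree hP0, hcompnd]
    have hQdeg : Q.degree < (n : ℕ) := by
      have h1 : Q.degree < P.degree := by
        have := Polynomial.degree_sub_lt hdegeq hcomp0 hcomplc
        rwa [hdegeq] at this
      have h2 : P.natDegree ≤ n := by
        have := (Polynomial.natDegree_lt_iff_degree_lt hP0).mpr hP
        omega
      calc Q.degree < P.degree := h1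
        _ = (P.natDegree : WithBot ℕ) := Polynomial.degree_eq_natDegree hP0
        _ ≤ (n : WithBot ℕ) := by exact_mod_cast h2
    have hQev : ∀ x : ℝ, Q.eval x = P.eval (x + 1) - P.eval x := by
      intro x
      simp [hQdef, Polynomial.eval_comp]
    set g : ℕ → ℝ := fun j => (-1 : ℝ) ^ j * (n.choose j) * P.eval (j : ℝ) with hg
    set q : ℕ → ℝ := fun k => (-1 : ℝ) ^ k * (n.choose k) * Q.eval (k : ℝ) with hq
    have step : ∀ k ∈ Finset.range (n + 1),
        (-1 : ℝ) ^ (k + 1) * (((n + 1).choose (k + 1) : ℕ) : ℝ) * P.eval ((k + 1 : ℕ) : ℝ)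
          = -q k - g k + g (k + 1) := by
      intro k _
      have hch : (n + 1).choose (k + 1) = n.choose k + n.choose (k + 1) :=
        Nat.choose_succ_succ n k
      rw [hch, hg, hq]
      push_cast
      rw [hQev]
      ring
    rw [Finset.sum_range_succ', Finset.sum_congr rfl step]
    have e1 : ∑ k ∈ Finset.range (n + 2), g k = ∑ k ∈ Finset.range (n + 1), g (k + 1) + g 0 :=
      Finset.sum_range_succ' g (n + 1)
    have e2 : ∑ k ∈ Finset.range (n + 2), g k = ∑ k ∈ Finset.range (n + 1), g k + g (n + 1) :=
      Finset.sum_range_succ g (n + 1)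
    have e3 : ∑ k ∈ Finset.range (n + 1), (-q k - g k + g (k + 1))
        = -(∑ k ∈ Finset.range (n + 1), q k) - (∑ k ∈ Finset.range (n + 1), g k)
          + ∑ k ∈ Finset.range (n + 1), g (k + 1) := by
      rw [Finset.sum_add_distrib, Finset.sum_sub_distrib, Finset.sum_neg_distrib]
    have hgn : g (n + 1) = 0 := by
      simp [hg, Nat.choose_succ_self]
    have hih : ∑ k ∈ Finset.range (n + 1), q k = 0 := ih Q hQdeg
    have hf0 : (-1 : ℝ) ^ 0 * (((n + 1).choose 0 : ℕ) : ℝ) * P.eval ((0 : ℕ) : ℝ) = g 0 := by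
      simp [hg]
    rw [hf0, e3]
    linarith [e1, e2, hih, hgn]

theorem stmt_3 (n i r : ℕ) (l : ℤ) (hl : -1 ≤ l) (hr : (r : ℤ) ≤ (i : ℤ) + l)
    (hn : (i : ℤ) + l < n) :
    ∑ k ∈ Finset.range (n + 1),
      poch (-(n : ℝ)) k * poch ((n : ℝ) - i + 1) k /
        (poch 1 k * poch ((l : ℝ) + 2) k) *
        (∏ m ∈ Finset.range r, ((k : ℝ) - m)) = 0 := by
  -- set up the natural number parameters a = l + 2 and d = n + 1 - i - a
  set a : ℕ := (l + 2).toNat with hadef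
  have ha : (a : ℤ) = l + 2 := Int.toNat_of_nonneg (by omega)
  have hia : (i : ℤ) + a ≤ (n : ℤ) + 1 := by omega
  have hian : i + a ≤ n + 1 := by exact_mod_cast hia
  set d : ℕ := n + 1 - i - a with hddef
  have hsum : i + a + d = n + 1 := by omega
  have hra : r + 2 ≤ i + a := by
    have : (r : ℤ) + 2 ≤ (i : ℤ) + a := by omega
    exact_mod_cast this
  have hdr : d + r < n := by omega
  have ha1 : 1 ≤ a := by omega
  -- real number versions
  have hla : ((l : ℝ) + 2) = (a : ℝ) := by exact_mod_cast ha.symm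
  have hni : (n : ℝ) - i + 1 = (a : ℝ) + d := by
    have : ((i + a + d : ℕ) : ℝ) = ((n + 1 : ℕ) : ℝ) := by rw [hsum]
    push_cast at this
    linarith
  have hapos : (0 : ℝ) < (a : ℝ) := by exact_mod_cast ha1
  -- the polynomial
  set P : Polynomial ℝ :=
    (ascPochhammer ℝ d).comp (X + C (a : ℝ)) * ∏ m ∈ Finset.range r, (X - C (m : ℝ)) with hPdef
  have hm1 : ((ascPochhammer ℝ d).comp (X + C (a : ℝ))).Monic :=
    (monic_ascPochhammer ℝ d).comp_X_add_C _
  have hm2 : (∏ m ∈ Finset.range r, (X - C (m : ℝ))).Monic :=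
    monic_prod_of_monic _ _ fun m _ => monic_X_sub_C _
  have hPmonic : P.Monic := hm1.mul hm2
  have hPdeg : P.degree < (n : ℕ) := by
    have h1 : ((ascPochhammer ℝ d).comp (X + C (a : ℝ))).natDegree = d := by
      rw [Polynomial.natDegree_comp, ascPochhammer_natDegree, Polynomial.natDegree_X_add_C,
        mul_one]
    have h2 : (∏ m ∈ Finset.range r, (X - C (m : ℝ))).natDegree = r := by
      rw [Polynomial.natDegree_prod (Finset.range r) (fun m : ℕ => X - C (m : ℝ))
          (fun m _ => Polynomial.X_sub_C_ne_zero _),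
        Finset.sum_congr rfl fun (x : ℕ) _ => Polynomial.natDegree_X_sub_C ((x : ℝ))]
      simp
    have hnd : P.natDegree = d + r := by
      rw [hPdef, Polynomial.natDegree_mul hm1.ne_zero hm2.ne_zero, h1, h2]
    rw [Polynomial.degree_eq_natDegree hPmonic.ne_zero, hnd]
    exact_mod_cast hdr
  have hPev : ∀ k : ℕ, P.eval (k : ℝ)
      = (ascPochhammer ℝ d).eval ((a : ℝ) + k) * ∏ m ∈ Finset.range r, ((k : ℝ) - m) := by
    intro k
    rw [hPdef]
    rw [Polynomial.eval_mul, Polynomial.eval_comp, Polynomial.eval_prod]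
    simp [add_comm]
  -- key per-term rewriting
  have key : ∀ k ∈ Finset.range (n + 1),
      poch (-(n : ℝ)) k * poch ((n : ℝ) - i + 1) k / (poch 1 k * poch ((l : ℝ) + 2) k) *
        (∏ m ∈ Finset.range r, ((k : ℝ) - m))
      = ((-1 : ℝ) ^ k * (n.choose k) * P.eval (k : ℝ)) / poch (a : ℝ) d := by
    intro k hk
    have A1 : poch (-(n : ℝ)) k = (-1 : ℝ) ^ k * ((Nat.factorial k : ℝ) * (n.choose k : ℝ)) := by
      rw [poch, ascPochhammer_eval_neg_eq_descPochhammer,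
        descPochhammer_eval_eq_descFactorial ℝ n k, Nat.descFactorial_eq_factorial_mul_choose]
      push_cast
      ring
    have A2 : poch 1 k = (Nat.factorial k : ℝ) := ascPochhammer_eval_one ℝ k
    -- Pochhammer addition identities
    have B1 : poch (a : ℝ) d * (ascPochhammer ℝ k).eval ((a : ℝ) + d)
        = poch (a : ℝ) (d + k) := by
      have := congrArg (Polynomial.eval ((a : ℝ))) (ascPochhammer_mul ℝ d k)
      simpa [poch, Polynomial.eval_comp] using this
    have B2 : poch (a : ℝ) k * (ascPochhammer ℝ d).eval ((a : ℝ) + k)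
        = poch (a : ℝ) (k + d) := by
      have := congrArg (Polynomial.eval ((a : ℝ))) (ascPochhammer_mul ℝ k d)
      simpa [poch, Polynomial.eval_comp] using this
    have A3 : poch ((n : ℝ) - i + 1) k * poch (a : ℝ) d
        = poch (a : ℝ) k * (ascPochhammer ℝ d).eval ((a : ℝ) + k) := by
      have e1 : poch ((n : ℝ) - i + 1) k = (ascPochhammer ℝ k).eval ((a : ℝ) + d) := by
        rw [hni]; rfl
      rw [e1, mul_comm, B1, B2, add_comm d k]
    -- nonvanishing
    have hk0 : (Nat.factorial k : ℝ) ≠ 0 := by positivity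
    have hpak : poch (a : ℝ) k ≠ 0 := ne_of_gt (ascPochhammer_pos k _ hapos)
    have hpad : poch (a : ℝ) d ≠ 0 := ne_of_gt (ascPochhammer_pos d _ hapos)
    rw [hla, A1, A2, hPev k]
    rw [div_mul_eq_mul_div, div_eq_div_iff (by exact mul_ne_zero hk0 hpak) hpad]
    linear_combination ((-1 : ℝ) ^ k * (Nat.factorial k : ℝ) * (n.choose k : ℝ) *
      (∏ m ∈ Finset.range r, ((k : ℝ) - m))) * A3
  rw [Finset.sum_congr rfl key, ← Finset.sum_div, alt_sum_poly n P hPdeg, zero_div]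
end

section
/- For an odd positive integer $i \le n$, the polynomial $h^n_{n-i}(t) = \sum_{k=0}^{n} d^i_{n,k} t^k$ with $d^i_{n,k} = (-1)^n \frac{\sqrt{2n-2i+1}}{(-n)_i} \frac{(-n)_k (n-i+1)_k}{(k!)^2} \prod_{m=0}^{(i-1)/2}(n+k+1-2m) \prod_{m=0}^{(i-3)/2}(n-k-1-2m)$ satisfies $\int_0^1 h^n_{n-i}(t)^2\,dt = 1$. -/
open Finset

/-- The coefficient `d^i_{n,k}` (for odd `i`): the product
`∏_{m=0}^{(i-1)/2}` has `(i+1)/2` factors and `∏_{m=0}^{(i-3)/2}` has `(i-1)/2` factors. -/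
noncomputable def d (n i k : ℕ) : ℝ :=
  (-1) ^ n * Real.sqrt (2 * (n : ℝ) - 2 * i + 1) / poch (-(n : ℝ)) i *
    (poch (-(n : ℝ)) k * poch ((n : ℝ) - i + 1) k / ((k.factorial : ℝ)) ^ 2) *
    (∏ m ∈ Finset.range ((i + 1) / 2), ((n : ℝ) + k + 1 - 2 * m)) *
    (∏ m ∈ Finset.range ((i - 1) / 2), ((n : ℝ) - k - 1 - 2 * m))

/-- The wavelet polynomial `h^n_{n-i}(t) = ∑_{k=0}^n d^i_{n,k} t^k` on `[0,1)`. -/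
noncomputable def h (n i : ℕ) (t : ℝ) : ℝ := ∑ k ∈ Finset.range (n + 1), d n i k * t ^ k


open Polynomial

lemma pascal_step (n : ℕ) (f : ℕ → ℝ) :
    ∑ k ∈ range (n+2), (-1:ℝ)^k * ((n+1).choose k) * f k
      = ∑ k ∈ range (n+1), (-1:ℝ)^k * (n.choose k) * (f k - f (k+1)) := by
  have h1 := Finset.sum_range_succ' (fun k => (-1:ℝ)^k * ((n+1).choose k) * f k) (n+1)
  have h2 := Finset.sum_range_succ' (fun k => (-1:ℝ)^k * (n.choose k) * f k) (n+1)
  have h3 := Finset.sum_range_succ (fun k => (-1:ℝ)^k * (n.choose k) * f k) (n+1)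
  simp only [Nat.choose_succ_succ] at h1
  rw [h3] at h2
  simp only [Nat.choose_self, Nat.choose_zero_right, Nat.cast_one, mul_one, pow_zero, one_mul,
    Nat.choose_succ_self, Nat.cast_zero, mul_zero, zero_mul, add_zero, Nat.cast_add,
    Nat.succ_eq_add_one] at h1 h2 ⊢
  rw [h1]
  have e2 : ∑ x ∈ range (n+1), (-1:ℝ)^(x+1) * ((n.choose x : ℝ) + (n.choose (x+1) : ℝ)) * f (x+1)
      = -(∑ k ∈ range (n+1), (-1:ℝ)^k * (n.choose k) * f (k+1))
        + (∑ k ∈ range (n+1), (-1:ℝ)^(k+1) * (n.choose (k+1)) * f (k+1)) := by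
    rw [← Finset.sum_neg_distrib, ← Finset.sum_add_distrib]
    apply Finset.sum_congr rfl; intro k _; ring
  have e3 : ∑ k ∈ range (n+1), (-1:ℝ)^k * (n.choose k) * (f k - f (k+1))
      = ∑ k ∈ range (n+1), (-1:ℝ)^k * (n.choose k) * f k
        - ∑ k ∈ range (n+1), (-1:ℝ)^k * (n.choose k) * f (k+1) := by
    rw [← Finset.sum_sub_distrib]; apply Finset.sum_congr rfl; intro k _; ring
  rw [e2, e3]
  linarith [h2]

lemma alt_sum_poly_s7 (n : ℕ) (p : ℝ[X]) (hp : p.degree < n) :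
    ∑ k ∈ range (n+1), (-1:ℝ)^k * (n.choose k) * p.eval (k:ℝ) = 0 := by
  induction n generalizing p with
  | zero =>
    have : p = 0 := by
      rw [← Polynomial.degree_eq_bot]
      exact Nat.WithBot.lt_zero_iff.mp (by exact_mod_cast hp)
    simp [this]
  | succ n ih =>
    have key := pascal_step n (fun k => p.eval (k:ℝ))
    rw [show n+1+1 = n+2 from rfl, key]
    set q := p - p.comp (X + C 1) with hq
    have hev : ∀ k : ℕ, p.eval (k:ℝ) - p.eval (((k+1:ℕ)):ℝ) = q.eval (k:ℝ) := by
      intro k; simp [hq, Polynomial.eval_comp]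
    have hdeg : q.degree < n := by
      rcases eq_or_ne p.natDegree 0 with h0 | h0
      · obtain ⟨a, ha⟩ := Polynomial.natDegree_eq_zero.mp h0
        have hz : q = 0 := by simp [hq, ← ha]
        rw [hz, Polynomial.degree_zero]
        exact WithBot.bot_lt_coe n
      · have hp0 : p ≠ 0 := fun h => h0 (by simp [h])
        have hn1 : (X + C (1:ℝ)).natDegree = 1 := Polynomial.natDegree_X_add_C 1
        have hlc : (p.comp (X + C 1)).leadingCoeff = p.leadingCoeff := by
          rw [Polynomial.leadingCoeff_comp (by rw [hn1]; exact one_ne_zero)]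
          rw [Polynomial.leadingCoeff_X_add_C, one_pow, mul_one]
        have hc : p.comp (X + C 1) ≠ 0 := by
          intro h
          apply hp0
          rw [← Polynomial.leadingCoeff_eq_zero, ← hlc, h, Polynomial.leadingCoeff_zero]
        have hdc : (p.comp (X + C 1)).degree = p.degree := by
          rw [Polynomial.degree_eq_natDegree hc, Polynomial.degree_eq_natDegree hp0,
            Polynomial.natDegree_comp, hn1, mul_one]
        have h5 : q.degree < p.degree := Polynomial.degree_sub_lt hdc.symm hp0 hlc.symm
        have h6 : p.degree ≤ n := by
          rw [Polynomial.degree_eq_natDegree hp0] at hp ⊢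
          exact_mod_cast Nat.lt_succ_iff.mp (by exact_mod_cast hp)
        exact lt_of_lt_of_le h5 h6
    calc ∑ k ∈ range (n+1), (-1:ℝ)^k * (n.choose k) * (p.eval (k:ℝ) - p.eval (((k+1:ℕ)):ℝ))
        = ∑ k ∈ range (n+1), (-1:ℝ)^k * (n.choose k) * q.eval (k:ℝ) := by
          apply Finset.sum_congr rfl; intro k _; rw [hev]
      _ = 0 := ih q hdeg

lemma alt_sum_inv (n : ℕ) (c : ℝ) (hc : 0 < c) :
    ∑ k ∈ range (n+1), (-1:ℝ)^k * (n.choose k) * (1/(c + k))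
      = n.factorial / ∏ u ∈ range (n+1), (c + u) := by
  induction n generalizing c with
  | zero => simp
  | succ n ih =>
    have key := pascal_step n (fun k => 1/(c + k))
    rw [show n+1+1 = n+2 from rfl, key]
    have split : ∑ k ∈ range (n+1), (-1:ℝ)^k * (n.choose k) * (1/(c+(k:ℝ)) - 1/(c+((k+1:ℕ):ℝ)))
        = ∑ k ∈ range (n+1), (-1:ℝ)^k * (n.choose k) * (1/(c+(k:ℝ)))
          - ∑ k ∈ range (n+1), (-1:ℝ)^k * (n.choose k) * (1/((c+1)+(k:ℝ))) := by
      rw [← Finset.sum_sub_distrib]; apply Finset.sum_congr rfl; intro k _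
      push_cast; ring
    have e1 := ih c hc
    have e2 := ih (c+1) (by linarith)
    rw [split, e1, e2]
    set Pa := ∏ u ∈ range (n+1), (c + (u:ℝ)) with hPa
    set Pb := ∏ u ∈ range (n+1), ((c+1) + (u:ℝ)) with hPb
    have hPa0 : Pa ≠ 0 := by
      rw [hPa]; apply ne_of_gt; apply Finset.prod_pos; intro u _; positivity
    have hPb0 : Pb ≠ 0 := by
      rw [hPb]; apply ne_of_gt; apply Finset.prod_pos; intro u _; positivity
    have hrel : ∏ u ∈ range (n+2), (c + (u:ℝ)) = c * Pb := by
      rw [Finset.prod_range_succ' (fun u => c + (u:ℝ)) (n+1)]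
      have : ∏ u ∈ range (n+1), (c + ((u+1:ℕ):ℝ)) = Pb :=
        Finset.prod_congr rfl (fun u _ => by push_cast; ring)
      rw [this]; push_cast; ring
    have hrel2 : ∏ u ∈ range (n+2), (c + (u:ℝ)) = Pa * (c + ((n:ℝ)+1)) := by
      rw [Finset.prod_range_succ (fun u => c + (u:ℝ)) (n+1)]; push_cast; ring
    rw [hrel]
    have hc0 : c ≠ 0 := ne_of_gt hc
    have hPbPa : c * Pb = Pa * (c + ((n:ℝ)+1)) := by rw [← hrel, hrel2]
    rw [div_sub_div _ _ hPa0 hPb0, div_eq_div_iff (mul_ne_zero hPa0 hPb0) (mul_ne_zero hc0 hPb0)]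
    push_cast [Nat.factorial_succ]
    linear_combination ((n.factorial : ℝ) * Pb) * hPbPa

lemma poch_succ (x : ℝ) (k : ℕ) : poch x (k+1) = poch x k * (x + k) := by
  unfold poch; rw [ascPochhammer_succ_eval]

lemma poch_neg (n : ℕ) : ∀ k, k ≤ n → poch (-(n:ℝ)) k = (-1)^k * k.factorial * (n.choose k) := by
  intro k
  induction k with
  | zero => intro _; simp [poch]
  | succ k ih =>
    intro hk
    have hk' : k ≤ n := Nat.le_of_succ_le hk
    rw [poch_succ, ih hk']
    have hch : (n.choose (k+1):ℝ) * ((k:ℝ)+1) = (n.choose k:ℝ) * ((n:ℝ)-(k:ℝ)) := by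
      have h2 : ((n.choose (k+1) * (k+1):ℕ):ℝ) = ((n.choose k * (n-k):ℕ):ℝ) := by
        rw [Nat.choose_succ_right_eq n k]
      push_cast [Nat.cast_sub hk'] at h2
      exact h2
    push_cast [Nat.factorial_succ, pow_succ]
    linear_combination ((-1:ℝ)^k * k.factorial) * hch

lemma poch_nat (c : ℕ) : ∀ k, poch ((c:ℝ)+1) k * c.factorial = (c+k).factorial := by
  intro k
  induction k with
  | zero => simp [poch]
  | succ k ih =>
    rw [poch_succ]
    have h1 : c + (k+1) = ((c+k))+1 := by ring
    rw [h1, Nat.factorial_succ]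
    push_cast
    linear_combination ((c:ℝ) + k + 1) * ih

lemma prod_range_factorial (x : ℕ) : ∀ m, (∏ u ∈ range m, ((x:ℝ)+u+1)) * x.factorial = (x+m).factorial := by
  intro m
  induction m with
  | zero => simp
  | succ m ih =>
    rw [Finset.prod_range_succ]
    rw [show x + (m+1) = (x+m)+1 from by ring, Nat.factorial_succ]
    push_cast
    linear_combination ((x:ℝ) + m + 1) * ih

lemma prod_desc (j : ℕ) : ∀ m, m ≤ j → (∏ u ∈ range m, ((j:ℝ)-u)) * (j-m).factorial = j.factorial := by
  intro m
  induction m with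
  | zero => simp
  | succ m ih =>
    intro hm
    rw [Finset.prod_range_succ]
    have h1 : j - m = (j - (m+1)) + 1 := by omega
    have h2 : ((j - (m+1) : ℕ) : ℝ) = (j:ℝ) - ((m:ℝ)+1) := by
      rw [Nat.cast_sub hm]; push_cast; ring
    have := ih (Nat.le_of_succ_le hm)
    rw [h1, Nat.factorial_succ] at this
    push_cast [h2] at this ⊢
    linear_combination this

lemma prod_neg_desc (j : ℕ) : ∏ u ∈ range j, ((u:ℝ)-j) = (-1)^j * j.factorial := by
  have h1 : ∏ u ∈ range j, ((u:ℝ)-j) = ∏ u ∈ range j, (-1) * ((j:ℝ)-u) :=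
    Finset.prod_congr rfl (fun u _ => by ring)
  have h2 := prod_desc j j le_rfl
  simp only [Nat.sub_self, Nat.factorial_zero, Nat.cast_one, mul_one] at h2
  rw [h1, Finset.prod_mul_distrib, Finset.prod_const, h2]
  simp

lemma prod_reflect1 (a : ℕ) (b : ℝ) :
    ∏ m ∈ range (a+1), (b+2*a+1-2*(m:ℝ)) = ∏ m ∈ range (a+1), (b+1+2*(m:ℝ)) := by
  rw [← Finset.prod_range_reflect (fun m => b+1+2*(m:ℝ)) (a+1)]
  apply Finset.prod_congr rfl
  intro m hm
  have hm' : m ≤ a := by simpa [Nat.lt_succ_iff] using hm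
  have h2 : ((a + 1 - 1 - m : ℕ):ℝ) = (a:ℝ) - m := by
    simp only [Nat.add_sub_cancel]; rw [Nat.cast_sub hm']
  simp only [h2]; ring

lemma prod_reflect2 (a : ℕ) (b : ℝ) :
    ∏ m ∈ range a, (b+2*a-2*(m:ℝ)) = ∏ m ∈ range a, (b+2+2*(m:ℝ)) := by
  rw [← Finset.prod_range_reflect (fun m => b+2+2*(m:ℝ)) a]
  apply Finset.prod_congr rfl
  intro m hm
  have hm' : m + 1 ≤ a := Finset.mem_range.mp hm
  have h2 : ((a - 1 - m : ℕ):ℝ) = (a:ℝ) - 1 - m := by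
    rw [show a - 1 - m = a - (1+m) from by omega, Nat.cast_sub (by omega)]
    push_cast; ring
  simp only [h2]; ring

lemma double_prod (b : ℕ) : ∀ a : ℕ,
    (∏ m ∈ range (a+1), ((b:ℝ)+1+2*(m:ℝ))) * (∏ m ∈ range a, ((b:ℝ)+2+2*(m:ℝ))) * b.factorial
      = (b+2*a+1).factorial := by
  intro a
  induction a with
  | zero =>
    rw [show b + 2*0 + 1 = b+1 from by ring, Nat.factorial_succ]
    rw [Finset.prod_range_one]
    simp only [Finset.range_zero, Finset.prod_empty, one_mul, mul_one]
    push_cast; ring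
  | succ a ih =>
    rw [Finset.prod_range_succ (fun m => (b:ℝ)+1+2*(m:ℝ)) (a+1),
      Finset.prod_range_succ (fun m => (b:ℝ)+2+2*(m:ℝ)) a]
    have h1 : b + 2*(a+1)+1 = ((b+2*a+1)+1)+1 := by ring
    rw [h1, Nat.factorial_succ, Nat.factorial_succ]
    push_cast
    linear_combination ((b:ℝ)+1+2*((a:ℝ)+1)) * ((b:ℝ)+2+2*(a:ℝ)) * ih

lemma sum_one_withbot (j : ℕ) : (∑ _u ∈ range j, (1:WithBot ℕ)) = (j:WithBot ℕ) := by
  rw [Finset.sum_const, Finset.card_range, nsmul_eq_mul, mul_one]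

set_option maxHeartbeats 2000000 in
theorem stmt_7 (n i : ℕ) (hodd : Odd i) (hi : 0 < i) (hin : i ≤ n) :
    ∫ t in (0:ℝ)..1, (h n i t) ^ 2 = 1 := by
  obtain ⟨a, ha⟩ := hodd
  have hn1 : 1 ≤ n := le_trans hi hin
  set j := n - i with hj
  have hnj : n = j + (2*a+1) := by omega
  have hij2 : (i + 1)/2 = a + 1 := by omega
  have hij3 : (i - 1)/2 = a := by omega
  have hiR : (i:ℝ) = 2*(a:ℝ)+1 := by rw [ha]; push_cast; ring
  have hjR : (j:ℝ) = (n:ℝ) - i := by rw [hj, Nat.cast_sub hin]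
  set w : ℝ := 2*(n:ℝ) - 2*(i:ℝ) + 1 with hwdef
  have hw : w = 2*(j:ℝ)+1 := by rw [hwdef, hjR]; ring
  have hw0 : (0:ℝ) ≤ w := by rw [hw]; positivity
  have hsqw : Real.sqrt w * Real.sqrt w = w := Real.mul_self_sqrt hw0
  set A : ℝ := ((-1:ℝ))^n / poch (-(n:ℝ)) i with hA
  set CB : ℝ[X] := ∏ u ∈ range j, (X + C ((u:ℝ)+1)) with hCB
  set P1 : ℝ[X] := ∏ m ∈ range (a+1), (X + C ((n:ℝ)+1-2*(m:ℝ))) with hP1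
  set P2 : ℝ[X] := ∏ m ∈ range a, (C ((n:ℝ)-1-2*(m:ℝ)) - X) with hP2
  set G : ℝ[X] := CB * P1 * P2 with hG
  have hdCB : CB.degree = (j:ℕ) := by
    rw [hCB, Polynomial.degree_prod]
    calc ∑ u ∈ range j, (X + C ((u:ℝ)+1)).degree
        = ∑ _u ∈ range j, (1:WithBot ℕ) :=
          Finset.sum_congr rfl (fun u _ => Polynomial.degree_X_add_C ((u:ℝ)+1))
      _ = (j:WithBot ℕ) := sum_one_withbot j
  have hdP1 : P1.degree = ((a+1 : ℕ):WithBot ℕ) := by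
    rw [hP1, Polynomial.degree_prod]
    calc ∑ m ∈ range (a+1), (X + C ((n:ℝ)+1-2*(m:ℝ))).degree
        = ∑ _m ∈ range (a+1), (1:WithBot ℕ) :=
          Finset.sum_congr rfl (fun m _ => Polynomial.degree_X_add_C ((n:ℝ)+1-2*(m:ℝ)))
      _ = ((a+1:ℕ):WithBot ℕ) := sum_one_withbot (a+1)
  have hdP2 : P2.degree = ((a : ℕ):WithBot ℕ) := by
    have hdeg1 : ∀ m : ℕ, (C ((n:ℝ)-1-2*(m:ℝ)) - X).degree = 1 := by
      intro m
      rw [show (C ((n:ℝ)-1-2*(m:ℝ)) - X) = -(X - C ((n:ℝ)-1-2*(m:ℝ))) from by ring,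
        Polynomial.degree_neg, Polynomial.degree_X_sub_C]
    rw [hP2, Polynomial.degree_prod]
    calc ∑ m ∈ range a, (C ((n:ℝ)-1-2*(m:ℝ)) - X).degree
        = ∑ _m ∈ range a, (1:WithBot ℕ) := Finset.sum_congr rfl (fun m _ => hdeg1 m)
      _ = ((a:ℕ):WithBot ℕ) := sum_one_withbot a
  have hdegG : G.degree = (n : ℕ) := by
    rw [hG, Polynomial.degree_mul, Polynomial.degree_mul, hdCB, hdP1, hdP2]
    rw [show ((j:ℕ):WithBot ℕ) + ((a+1:ℕ):WithBot ℕ) + ((a:ℕ):WithBot ℕ)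
      = ((j + (a+1) + a : ℕ):WithBot ℕ) from by push_cast; ring]
    congr 1
    omega
  have hG0 : G ≠ 0 := by
    intro h0
    rw [h0, Polynomial.degree_zero] at hdegG
    exact (by simp : ((⊥:WithBot ℕ) ≠ (n:ℕ))) hdegG
  have hpoch0 : poch (-(n:ℝ)) i ≠ 0 := by
    rw [poch_neg n i hin]
    have h1 : 0 < n.choose i := Nat.choose_pos hin
    have h2 : ((-1:ℝ))^i ≠ 0 := by positivity
    positivity
  have d_eq : ∀ k, k ≤ n → d n i k
      = Real.sqrt w * A / j.factorial * ((-1:ℝ)^k * (n.choose k)) * G.eval (k:ℝ) := by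
    intro k hk
    have hk0 : (k.factorial : ℝ) ≠ 0 := Nat.cast_ne_zero.mpr (Nat.factorial_ne_zero k)
    have hj0 : (j.factorial : ℝ) ≠ 0 := Nat.cast_ne_zero.mpr (Nat.factorial_ne_zero j)
    have e2 : (n:ℝ) - (i:ℝ) + 1 = (j:ℝ)+1 := by rw [hjR]
    have eCB : CB.eval (k:ℝ) = ∏ u ∈ range j, ((k:ℝ)+u+1) := by
      rw [hCB, Polynomial.eval_prod]
      exact Finset.prod_congr rfl (fun u _ => by simp; ring)
    have eP1 : P1.eval (k:ℝ) = ∏ m ∈ range (a+1), ((n:ℝ)+(k:ℝ)+1-2*(m:ℝ)) := by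
      rw [hP1, Polynomial.eval_prod]
      exact Finset.prod_congr rfl (fun m _ => by simp; ring)
    have eP2 : P2.eval (k:ℝ) = ∏ m ∈ range a, ((n:ℝ)-(k:ℝ)-1-2*(m:ℝ)) := by
      rw [hP2, Polynomial.eval_prod]
      exact Finset.prod_congr rfl (fun m _ => by simp; ring)
    have ekey : poch ((j:ℝ)+1) k * (j.factorial:ℝ) = (∏ u ∈ range j, ((k:ℝ)+u+1)) * (k.factorial:ℝ) := by
      rw [poch_nat j k, prod_range_factorial k j, Nat.add_comm j k]
    have eX1 : poch ((j:ℝ)+1) k = (∏ u ∈ range j, ((k:ℝ)+u+1)) * (k.factorial:ℝ) / (j.factorial:ℝ) := by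
      rw [eq_div_iff hj0]; exact ekey
    simp only [d, hij2, hij3]
    rw [← hwdef, poch_neg n k hk, e2, eX1]
    rw [hG, Polynomial.eval_mul, Polynomial.eval_mul, eCB, eP1, eP2, hA]
    field_simp
  -- integral expansion
  have hInt : (∫ t in (0:ℝ)..1, (h n i t) ^ 2)
      = ∑ l ∈ range (n+1), d n i l * ∑ k ∈ range (n+1), d n i k * (1/((l:ℝ)+(k:ℝ)+1)) := by
    have hsq : ∀ t:ℝ, (h n i t)^2
        = ∑ l ∈ range (n+1), ∑ k ∈ range (n+1), (d n i l * d n i k) * t^(l+k) := by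
      intro t
      rw [h, sq, Finset.sum_mul_sum]
      exact Finset.sum_congr rfl (fun l _ => Finset.sum_congr rfl (fun k _ => by
        rw [pow_add]; ring))
    calc (∫ t in (0:ℝ)..1, (h n i t) ^ 2)
        = ∫ t in (0:ℝ)..1, ∑ l ∈ range (n+1), ∑ k ∈ range (n+1),
            (d n i l * d n i k) * t^(l+k) := by
          apply intervalIntegral.integral_congr
          intro t _
          exact hsq t
      _ = ∑ l ∈ range (n+1), ∫ t in (0:ℝ)..1, ∑ k ∈ range (n+1),
            (d n i l * d n i k) * t^(l+k) := by
          apply intervalIntegral.integral_finset_sum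
          intro l _
          exact (continuous_finset_sum _ (fun k _ =>
            (continuous_const.mul (continuous_pow (l+k))))).intervalIntegrable 0 1
      _ = ∑ l ∈ range (n+1), ∑ k ∈ range (n+1),
            ∫ t in (0:ℝ)..1, (d n i l * d n i k) * t^(l+k) := by
          apply Finset.sum_congr rfl
          intro l _
          apply intervalIntegral.integral_finset_sum
          intro k _
          exact (continuous_const.mul (continuous_pow (l+k))).intervalIntegrable 0 1
      _ = ∑ l ∈ range (n+1), ∑ k ∈ range (n+1), (d n i l * d n i k) * (1/((l:ℝ)+(k:ℝ)+1)) := by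
          apply Finset.sum_congr rfl
          intro l _
          apply Finset.sum_congr rfl
          intro k _
          rw [intervalIntegral.integral_const_mul, integral_pow]
          push_cast
          norm_num
      _ = ∑ l ∈ range (n+1), d n i l * ∑ k ∈ range (n+1), d n i k * (1/((l:ℝ)+(k:ℝ)+1)) := by
          apply Finset.sum_congr rfl
          intro l _
          rw [Finset.mul_sum]
          exact Finset.sum_congr rfl (fun k _ => by ring)
  -- vanishing for divisor case
  have Mzero : ∀ l : ℕ, (X + C ((l:ℝ)+1)) ∣ G →
      (∑ k ∈ range (n+1), d n i k * (1/((l:ℝ)+(k:ℝ)+1))) = 0 := by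
    intro l hdvdG
    obtain ⟨Q, hQ⟩ := hdvdG
    have hQ0 : Q ≠ 0 := by
      rintro rfl
      rw [mul_zero] at hQ
      exact hG0 hQ
    have hdQ : Q.degree < (n:ℕ) := by
      have h1 := hdegG
      rw [hQ, Polynomial.degree_mul, Polynomial.degree_X_add_C,
        Polynomial.degree_eq_natDegree hQ0] at h1
      have h2 : 1 + Q.natDegree = n := by exact_mod_cast h1
      rw [Polynomial.degree_eq_natDegree hQ0]
      exact_mod_cast (by omega : Q.natDegree < n)
    calc ∑ k ∈ range (n+1), d n i k * (1/((l:ℝ)+(k:ℝ)+1))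
        = ∑ k ∈ range (n+1), (Real.sqrt w * A / j.factorial)
            * ((-1:ℝ)^k * (n.choose k) * Q.eval (k:ℝ)) := by
          apply Finset.sum_congr rfl
          intro k hk
          rw [d_eq k (by simp [Finset.mem_range] at hk; omega), hQ, Polynomial.eval_mul]
          have hkl : ((l:ℝ)+(k:ℝ)+1) ≠ 0 := by positivity
          simp only [Polynomial.eval_add, Polynomial.eval_X, Polynomial.eval_C]
          field_simp
          ring
      _ = (Real.sqrt w * A / j.factorial)
            * ∑ k ∈ range (n+1), (-1:ℝ)^k * (n.choose k) * Q.eval (k:ℝ) := by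
          rw [Finset.mul_sum]
      _ = 0 := by rw [alt_sum_poly_s7 n Q hdQ, mul_zero]
  -- d vanishing
  have dzero : ∀ l : ℕ, j < l → l ≤ n → (l - j) % 2 = 0 → d n i l = 0 := by
    intro l hjl hln hpar
    have hln' : l < n := by omega
    set m₁ := (n - l - 1)/2 with hm₁
    have hm₁lt : m₁ < a := by omega
    have hcast : ((n:ℝ) - (l:ℝ) - 1 - 2*(m₁:ℝ)) = 0 := by
      have h2 : 2*m₁ + l + 1 = n := by omega
      have h3 : ((2*m₁ + l + 1 : ℕ):ℝ) = (n:ℝ) := by rw [h2]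
      push_cast at h3
      linarith
    simp only [d, hij3]
    rw [Finset.prod_eq_zero (Finset.mem_range.mpr hm₁lt) hcast, mul_zero]
  -- dvd cases
  have hdvd : ∀ l : ℕ, l ≤ n → l ≠ j → (l - j) % 2 = 1 ∨ l < j → (X + C ((l:ℝ)+1)) ∣ G := by
    intro l hln hlj hcase
    rcases hcase with hpar | hlt
    · have hjl : j < l := by omega
      set m₀ := (n - l)/2 with hm₀
      have hm₀mem : m₀ ∈ range (a+1) := Finset.mem_range.mpr (by omega)
      have hfac : (n:ℝ)+1-2*(m₀:ℝ) = (l:ℝ)+1 := by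
        have h2 : 2*m₀ + l = n := by omega
        have h3 : ((2*m₀ + l : ℕ):ℝ) = (n:ℝ) := by rw [h2]
        push_cast at h3
        linarith
      have hd1 : (X + C ((l:ℝ)+1)) ∣ P1 := by
        rw [hP1, ← hfac]
        exact Finset.dvd_prod_of_mem _ hm₀mem
      rw [hG]
      exact (hd1.mul_left CB).mul_right P2
    · have hd1 : (X + C ((l:ℝ)+1)) ∣ CB := by
        rw [hCB]
        exact Finset.dvd_prod_of_mem _ (Finset.mem_range.mpr hlt)
      rw [hG]
      exact (hd1.mul_right P1).mul_right P2
  rw [hInt]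
  rw [Finset.sum_eq_single_of_mem j (by simp [Finset.mem_range]; omega)]
  rotate_left
  · intro l hl hlj
    rcases Nat.lt_or_ge l j with hc | hc
    · rw [Mzero l (hdvd l (by simp [Finset.mem_range] at hl; omega) hlj (Or.inr hc)), mul_zero]
    · have hlj' : j < l := by omega
      rcases Nat.mod_two_eq_zero_or_one (l - j) with hpar | hpar
      · rw [dzero l hlj' (by simp [Finset.mem_range] at hl; omega) hpar, zero_mul]
      · rw [Mzero l (hdvd l (by simp [Finset.mem_range] at hl; omega) hlj (Or.inl hpar)), mul_zero]
  -- main term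
  set c : ℝ := (j:ℝ)+1 with hc
  set G₀ : ℝ := G.eval (-c) with hG₀
  have hdvd2 : (X + C c) ∣ (G - C G₀) := by
    have h1 : (X - C (-c)) ∣ (G - C G₀) :=
      (Polynomial.dvd_iff_isRoot).mpr (by simp [Polynomial.IsRoot, hG₀])
    rwa [map_neg, sub_neg_eq_add] at h1
  obtain ⟨Q, hQ⟩ := hdvd2
  have hndG : G.natDegree = n := Polynomial.natDegree_eq_of_degree_eq_some hdegG
  have hdQ : Q.degree < (n:ℕ) := by
    rcases eq_or_ne Q 0 with rfl | hQ0
    · rw [Polynomial.degree_zero]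
      exact WithBot.bot_lt_coe n
    · have hXc0 : (X + C c) ≠ 0 := Polynomial.X_add_C_ne_zero c
      have h1 : (G - C G₀).natDegree = 1 + Q.natDegree := by
        rw [hQ, Polynomial.natDegree_mul hXc0 hQ0, Polynomial.natDegree_X_add_C]
      have h2 : (G - C G₀).natDegree ≤ n := by
        refine le_trans (Polynomial.natDegree_sub_le _ _) ?_
        simp [hndG]
      rw [Polynomial.degree_eq_natDegree hQ0]
      exact_mod_cast (by omega : Q.natDegree < n)
  have hGk : ∀ k:ℕ, G.eval (k:ℝ) = ((k:ℝ)+c) * Q.eval (k:ℝ) + G₀ := by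
    intro k
    have h1 := congrArg (Polynomial.eval (k:ℝ)) hQ
    simp only [Polynomial.eval_sub, Polynomial.eval_mul, Polynomial.eval_add,
      Polynomial.eval_X, Polynomial.eval_C] at h1
    linarith
  set Pc : ℝ := ∏ u ∈ range (n+1), (c + (u:ℝ)) with hPcdef
  have hMj : (∑ k ∈ range (n+1), d n i k * (1/((j:ℝ)+(k:ℝ)+1)))
      = (Real.sqrt w * A / j.factorial) * G₀ * ((n.factorial:ℝ) / Pc) := by
    have hterm : ∀ k ∈ range (n+1), d n i k * (1/((j:ℝ)+(k:ℝ)+1))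
        = (Real.sqrt w * A / j.factorial) * ((-1:ℝ)^k * (n.choose k) * Q.eval (k:ℝ))
          + (Real.sqrt w * A / j.factorial) * G₀ * ((-1:ℝ)^k * (n.choose k) * (1/(c+(k:ℝ)))) := by
      intro k hk
      rw [d_eq k (by simp [Finset.mem_range] at hk; omega), hGk k]
      have hck : c + (k:ℝ) ≠ 0 := by rw [hc]; positivity
      have hjk : (j:ℝ)+(k:ℝ)+1 = c + (k:ℝ) := by rw [hc]; ring
      rw [hjk]
      field_simp
      ring
    rw [Finset.sum_congr rfl hterm, Finset.sum_add_distrib]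
    have e1 : ∑ k ∈ range (n+1), (Real.sqrt w * A / j.factorial)
        * ((-1:ℝ)^k * (n.choose k) * Q.eval (k:ℝ)) = 0 := by
      rw [← Finset.mul_sum]
      have := alt_sum_poly_s7 n Q hdQ
      rw [show (∑ k ∈ range (n+1), (-1:ℝ)^k * (n.choose k) * Q.eval (k:ℝ))
        = ∑ k ∈ range (n+1), (-1:ℝ)^k * (n.choose k) * Q.eval (k:ℝ) from rfl] at this
      rw [this, mul_zero]
    have e2 : ∑ k ∈ range (n+1), (Real.sqrt w * A / j.factorial) * G₀
        * ((-1:ℝ)^k * (n.choose k) * (1/(c+(k:ℝ))))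
        = (Real.sqrt w * A / j.factorial) * G₀ * ((n.factorial:ℝ) / Pc) := by
      rw [← Finset.mul_sum]
      congr 1
      exact alt_sum_inv n c (by rw [hc]; positivity)
    rw [e1, e2, zero_add]
  rw [hMj, d_eq j (by omega)]
  -- now substitute explicit values
  have hsgn : ∀ m:ℕ, ((-1:ℝ))^m * (-1)^m = 1 := by
    intro m
    rw [← pow_add]
    exact Even.neg_one_pow ⟨m, by ring⟩
  have hnR : (n:ℝ) = (j:ℝ) + 2*(a:ℝ) + 1 := by
    have h1 := congrArg (Nat.cast : ℕ → ℝ) hnj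
    push_cast at h1
    linarith
  have hbNR : ((2*j+1:ℕ):ℝ) = 2*(j:ℝ)+1 := by push_cast; ring
  set Pi1 : ℝ := ∏ m ∈ range (a+1), (((2*j+1:ℕ):ℝ)+1+2*(m:ℝ)) with hPi1def
  set Pi2 : ℝ := ∏ m ∈ range a, (((2*j+1:ℕ):ℝ)+2+2*(m:ℝ)) with hPi2def
  set Pi3 : ℝ := ∏ m ∈ range (a+1), (((0:ℕ):ℝ)+1+2*(m:ℝ)) with hPi3def
  set Pi4 : ℝ := ∏ m ∈ range a, (((0:ℕ):ℝ)+2+2*(m:ℝ)) with hPi4def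
  have hPi2pos : 0 < Pi2 := by
    rw [hPi2def]
    apply Finset.prod_pos
    intro m _
    positivity
  have hPi4pos : 0 < Pi4 := by
    rw [hPi4def]
    apply Finset.prod_pos
    intro m _
    positivity
  have hP1j : P1.eval ((j:ℕ):ℝ) = Pi1 := by
    calc P1.eval ((j:ℕ):ℝ)
        = ∏ m ∈ range (a+1), (((2*j+1:ℕ):ℝ)+2*(a:ℝ)+1-2*(m:ℝ)) := by
          rw [hP1, Polynomial.eval_prod]
          apply Finset.prod_congr rfl
          intro m _
          simp only [Polynomial.eval_add, Polynomial.eval_X, Polynomial.eval_C]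
          rw [hnR, hbNR]; ring
      _ = Pi1 := by rw [hPi1def]; exact prod_reflect1 a _
  have hP2c : P2.eval (-c) = Pi2 := by
    calc P2.eval (-c)
        = ∏ m ∈ range a, (((2*j+1:ℕ):ℝ)+2*(a:ℝ)-2*(m:ℝ)) := by
          rw [hP2, Polynomial.eval_prod]
          apply Finset.prod_congr rfl
          intro m _
          simp only [Polynomial.eval_sub, Polynomial.eval_X, Polynomial.eval_C]
          rw [hnR, hbNR, hc]; ring
      _ = Pi2 := by rw [hPi2def]; exact prod_reflect2 a _
  have hP1c : P1.eval (-c) = Pi3 := by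
    calc P1.eval (-c)
        = ∏ m ∈ range (a+1), (((0:ℕ):ℝ)+2*(a:ℝ)+1-2*(m:ℝ)) := by
          rw [hP1, Polynomial.eval_prod]
          apply Finset.prod_congr rfl
          intro m _
          simp only [Polynomial.eval_add, Polynomial.eval_X, Polynomial.eval_C]
          rw [hnR, hc]; push_cast; ring
      _ = Pi3 := by rw [hPi3def]; exact prod_reflect1 a _
  have hP2j : P2.eval ((j:ℕ):ℝ) = Pi4 := by
    calc P2.eval ((j:ℕ):ℝ)
        = ∏ m ∈ range a, (((0:ℕ):ℝ)+2*(a:ℝ)-2*(m:ℝ)) := by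
          rw [hP2, Polynomial.eval_prod]
          apply Finset.prod_congr rfl
          intro m _
          simp only [Polynomial.eval_sub, Polynomial.eval_X, Polynomial.eval_C]
          rw [hnR]; push_cast; ring
      _ = Pi4 := by rw [hPi4def]; exact prod_reflect2 a _
  have hj0 : (j.factorial:ℝ) ≠ 0 := Nat.cast_ne_zero.mpr (Nat.factorial_ne_zero j)
  have hi0 : (i.factorial:ℝ) ≠ 0 := Nat.cast_ne_zero.mpr (Nat.factorial_ne_zero i)
  have hn0 : (n.factorial:ℝ) ≠ 0 := Nat.cast_ne_zero.mpr (Nat.factorial_ne_zero n)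
  have h2j0 : ((2*j).factorial:ℝ) ≠ 0 := Nat.cast_ne_zero.mpr (Nat.factorial_ne_zero _)
  have hbN0 : ((2*j+1).factorial:ℝ) ≠ 0 := Nat.cast_ne_zero.mpr (Nat.factorial_ne_zero _)
  have hnj10 : ((n+j+1).factorial:ℝ) ≠ 0 := Nat.cast_ne_zero.mpr (Nat.factorial_ne_zero _)
  have hCBj' : CB.eval ((j:ℕ):ℝ) = ((2*j).factorial:ℝ)/(j.factorial:ℝ) := by
    rw [eq_div_iff hj0]
    have h1 := prod_range_factorial j j
    rw [show j+j = 2*j from by omega] at h1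
    rw [← h1]
    congr 1
    rw [hCB, Polynomial.eval_prod]
    apply Finset.prod_congr rfl
    intro u _
    simp only [Polynomial.eval_add, Polynomial.eval_X, Polynomial.eval_C]
    ring
  have hCBc : CB.eval (-c) = (-1:ℝ)^j * (j.factorial:ℝ) := by
    rw [← prod_neg_desc j, hCB, Polynomial.eval_prod]
    apply Finset.prod_congr rfl
    intro u _
    simp only [Polynomial.eval_add, Polynomial.eval_X, Polynomial.eval_C]
    rw [hc]; ring
  have hPc' : Pc = ((n+j+1).factorial:ℝ)/(j.factorial:ℝ) := by
    rw [eq_div_iff hj0]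
    have h1 := prod_range_factorial j (n+1)
    rw [show j+(n+1) = n+j+1 from by omega] at h1
    rw [← h1]
    congr 1
    rw [hPcdef]
    apply Finset.prod_congr rfl
    intro u _
    rw [hc]; push_cast; ring
  have hPi1' : Pi1 = ((n+j+1).factorial:ℝ)/(((2*j+1).factorial:ℝ) * Pi2) := by
    rw [eq_div_iff (mul_ne_zero hbN0 (ne_of_gt hPi2pos))]
    have h1 := double_prod (2*j+1) a
    rw [show 2*j+1+2*a+1 = n+j+1 from by omega] at h1
    rw [← h1, hPi1def, hPi2def]
    ring
  have hPi3' : Pi3 = (i.factorial:ℝ)/Pi4 := by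
    rw [eq_div_iff (ne_of_gt hPi4pos)]
    have h1 := double_prod 0 a
    rw [show 0+2*a+1 = i from by omega] at h1
    simp only [Nat.factorial_zero, Nat.cast_one, mul_one] at h1
    rw [← h1, hPi3def, hPi4def]
  have hsqw' : Real.sqrt w * Real.sqrt w = ((2*j+1).factorial:ℝ)/((2*j).factorial:ℝ) := by
    rw [hsqw, hw, eq_div_iff h2j0]
    have hfact : ((2*j+1).factorial:ℝ) = (2*(j:ℝ)+1) * ((2*j).factorial:ℝ) := by
      rw [show 2*j+1 = (2*j)+1 from rfl, Nat.factorial_succ]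
      push_cast; ring
    linarith [hfact]
  have hApoch : poch (-(n:ℝ)) i = (-1:ℝ)^i * (i.factorial:ℝ) * (n.choose i:ℝ) := poch_neg n i hin
  have hAA : A * A = 1 / ((i.factorial:ℝ) * (n.choose i:ℝ))^2 := by
    rw [hA, hApoch, div_mul_div_comm, hsgn n]
    congr 1
    calc ((-1:ℝ)^i * (i.factorial:ℝ) * (n.choose i:ℝ)) * ((-1:ℝ)^i * (i.factorial:ℝ) * (n.choose i:ℝ))
        = ((-1:ℝ)^i * (-1:ℝ)^i) * ((i.factorial:ℝ) * (n.choose i:ℝ))^2 := by ring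
      _ = ((i.factorial:ℝ) * (n.choose i:ℝ))^2 := by rw [hsgn i, one_mul]
  have hchoosej' : (n.choose j:ℝ) = (n.factorial:ℝ)/((j.factorial:ℝ) * (i.factorial:ℝ)) := by
    rw [eq_div_iff (mul_ne_zero hj0 hi0)]
    have h1 := Nat.choose_mul_factorial_mul_factorial (show j ≤ n by omega)
    rw [show n - j = i from by omega] at h1
    have h2 := congrArg (Nat.cast : ℕ → ℝ) h1
    push_cast at h2
    linarith
  have hchoosei' : (n.choose i:ℝ) = (n.factorial:ℝ)/((i.factorial:ℝ) * (j.factorial:ℝ)) := by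
    rw [eq_div_iff (mul_ne_zero hi0 hj0)]
    have h1 := Nat.choose_mul_factorial_mul_factorial hin
    rw [show n - i = j from by omega] at h1
    have h2 := congrArg (Nat.cast : ℕ → ℝ) h1
    push_cast at h2
    linarith
  have hGjexp : G.eval ((j:ℕ):ℝ) = CB.eval ((j:ℕ):ℝ) * P1.eval ((j:ℕ):ℝ) * P2.eval ((j:ℕ):ℝ) := by
    rw [hG, Polynomial.eval_mul, Polynomial.eval_mul]
  have hG₀exp : G₀ = CB.eval (-c) * P1.eval (-c) * P2.eval (-c) := by
    rw [hG₀, hG, Polynomial.eval_mul, Polynomial.eval_mul]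
  have hsG₀ : ((-1:ℝ))^j * G₀ = (j.factorial:ℝ) * Pi3 * Pi2 := by
    rw [hG₀exp, hCBc, hP1c, hP2c]
    linear_combination ((j.factorial:ℝ) * Pi3 * Pi2) * hsgn j
  calc Real.sqrt w * A / (j.factorial:ℝ) * ((-1:ℝ)^j * (n.choose j:ℝ)) * G.eval ((j:ℕ):ℝ)
        * (Real.sqrt w * A / (j.factorial:ℝ) * G₀ * ((n.factorial:ℝ) / Pc))
      = (Real.sqrt w * Real.sqrt w) * (A*A) * (n.choose j:ℝ) * (((-1:ℝ)^j) * G₀)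
        * G.eval ((j:ℕ):ℝ) * (n.factorial:ℝ) / ((j.factorial:ℝ)^2 * Pc) := by
        ring
    _ = 1 := by
        rw [hsG₀, hAA, hGjexp, hCBj', hP1j, hP2j, hPi1', hPi3', hPc', hsqw', hchoosej', hchoosei']
        field_simp
end

section
/- For odd positive integers $i < j \le n$, the polynomials $h^n_{n-i}$ and $h^n_{n-j}$ defined by $h^n_{n-i}(t) = \sum_{k=0}^n d^i_{n,k} t^k$ with $d^i_{n,k} = (-1)^n \frac{\sqrt{2n-2i+1}}{(-n)_i} \frac{(-n)_k (n-i+1)_k}{(k!)^2} \prod_{m=0}^{(i-1)/2}(n+k+1-2m) \prod_{m=0}^{(i-3)/2}(n-k-1-2m)$ satisfy $\int_0^1 h^n_{n-i}(t) h^n_{n-j}(t)\,dt = 0$. -/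
open Finset

section Aux
open Polynomial fwdDiff


lemma natDegree_shift_sub (p : ℝ[X]) (N : ℕ) (hp : p.natDegree ≤ N + 1) :
    (p.comp (X + C 1) - p).natDegree ≤ N := by
  rcases eq_or_ne (p.comp (X + C 1) - p) 0 with h | h
  · rw [h]; simp
  rcases Nat.eq_zero_or_pos p.natDegree with h0 | h0
  · exfalso
    obtain ⟨a, rfl⟩ := natDegree_eq_zero.mp h0
    simp at h
  have hp0 : p ≠ 0 := fun hh => by simp [hh] at h0
  have hdX : (X + C (1:ℝ)).natDegree = 1 := natDegree_X_add_C 1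
  have hcompdeg : (p.comp (X + C 1)).natDegree = p.natDegree := by
    rw [natDegree_comp, hdX, mul_one]
  have hcomp0 : p.comp (X + C 1) ≠ 0 := by
    intro hh
    rw [hh, natDegree_zero] at hcompdeg
    omega
  have hlc : (p.comp (X + C 1)).leadingCoeff = p.leadingCoeff := by
    rw [leadingCoeff_comp (by rw [hdX]; exact one_ne_zero)]
    rw [(monic_X_add_C (1:ℝ)).leadingCoeff, one_pow, mul_one]
  have hdeg : (p.comp (X + C 1) - p).degree < p.degree := by
    have := degree_sub_lt (p := p.comp (X + C 1)) (q := p)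
      (by rw [degree_eq_natDegree hcomp0, degree_eq_natDegree hp0, hcompdeg]) hcomp0 hlc
    rwa [degree_eq_natDegree hcomp0, hcompdeg, ← degree_eq_natDegree hp0] at this
  have := Polynomial.natDegree_lt_natDegree h hdeg
  omega

lemma fwdDiff_eval (p : ℝ[X]) :
    Δ_[(1:ℝ)] (fun x => p.eval x) = fun x => (p.comp (X + C 1) - p).eval x := by
  funext y
  simp [fwdDiff, Polynomial.eval_comp]

lemma fwdDiff_iter_poly : ∀ (n : ℕ) (p : ℝ[X]), p.natDegree < n → ∀ y : ℝ,
    (Δ_[(1:ℝ)])^[n] (fun x => p.eval x) y = 0 := by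
  intro n
  induction n with
  | zero => omega
  | succ n ih =>
    intro p hp y
    rw [Function.iterate_succ_apply, fwdDiff_eval]
    rcases Nat.eq_zero_or_pos n with rfl | hn
    · obtain ⟨a, rfl⟩ := natDegree_eq_zero.mp (by omega : p.natDegree = 0)
      simp
    · exact ih _ (by have := natDegree_shift_sub p (n-1) (by omega); omega) y

lemma altsum (n : ℕ) (p : ℝ[X]) (hp : p.natDegree < n) :
    ∑ k ∈ range (n + 1), (-1 : ℝ) ^ k * (n.choose k : ℝ) * p.eval (k : ℝ) = 0 := by
  have H := (fwdDiff_iter_eq_sum_shift (1 : ℝ) (fun x => p.eval x) n 0).symm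
  rw [fwdDiff_iter_poly n p hp 0] at H
  have key : ∀ k ∈ range (n + 1), ((-1:ℤ)^(n-k) * (n.choose k : ℤ)) • p.eval ((0:ℝ) + k • (1:ℝ))
      = (-1:ℝ)^n * ((-1:ℝ)^k * (n.choose k : ℝ) * p.eval (k:ℝ)) := by
    intro k hk
    simp only [mem_range] at hk
    have e2 : (-1:ℝ)^k * (-1:ℝ)^k = 1 := by
      rw [← pow_add]; exact Even.neg_one_pow ⟨k, by ring⟩
    have e1 : (-1:ℝ)^(n-k) * (-1:ℝ)^k = (-1:ℝ)^n := by rw [← pow_add]; congr 1; omega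
    have e3 : (-1:ℝ)^(n-k) = (-1:ℝ)^n * (-1:ℝ)^k := by
      rw [← e1, mul_assoc, e2, mul_one]
    have e4 : (0:ℝ) + k • (1:ℝ) = (k:ℝ) := by simp
    rw [zsmul_eq_mul, e4]
    push_cast
    rw [e3]; ring
  rw [Finset.sum_congr rfl key, ← Finset.mul_sum] at H
  rcases mul_eq_zero.mp H with h | h
  · exact absurd h (pow_ne_zero _ (by norm_num))
  · exact h


lemma poch_neg_nat (n k : ℕ) : poch (-(n : ℝ)) k = (-1)^k * (n.descFactorial k : ℝ) := by
  rw [poch, ascPochhammer_eval_neg_eq_descPochhammer]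
  rw [descPochhammer_eval_eq_descFactorial]

lemma poch_fact (r k : ℕ) : ((r.factorial : ℝ)) * poch ((r : ℝ) + 1) k = ((r + k).factorial : ℝ) := by
  rw [poch]
  exact_mod_cast factorial_mul_ascPochhammer ℝ r k

lemma poch_prod (x : ℝ) (k : ℕ) : poch x k = ∏ m ∈ range k, (x + m) := by
  induction k with
  | zero => simp [poch]
  | succ k ih =>
    rw [poch, ascPochhammer_succ_right, eval_mul, ← poch, ih, prod_range_succ]
    simp

lemma helper1 (n i k : ℕ) (hkn : k ≤ n) (hin : i ≤ n) :
    poch (-(n : ℝ)) k * poch ((n : ℝ) - i + 1) k / ((k.factorial : ℝ)) ^ 2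
      = (-1)^k * (n.choose k : ℝ) * (∏ m ∈ range (n - i), ((k : ℝ) + m + 1)) /
        ((n - i).factorial : ℝ) := by
  have h1 := poch_neg_nat n k
  have h2 : (((n-i).factorial : ℝ)) * poch ((n:ℝ) - i + 1) k = (((n-i) + k).factorial : ℝ) := by
    rw [show (n:ℝ) - i + 1 = ((n - i : ℕ) : ℝ) + 1 by push_cast [hin]; ring]
    exact poch_fact (n-i) k
  have h3 : ((k.factorial : ℝ)) * (∏ m ∈ range (n - i), ((k : ℝ) + m + 1))
      = ((k + (n - i)).factorial : ℝ) := by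
    have := poch_fact k (n - i)
    rw [poch_prod] at this
    rw [← this]
    congr 1
    exact Finset.prod_congr rfl (fun m _ => by ring)
  have h4 : (n.descFactorial k : ℝ) = (k.factorial : ℝ) * (n.choose k : ℝ) := by
    exact_mod_cast Nat.descFactorial_eq_factorial_mul_choose n k
  have hkf : (k.factorial : ℝ) ≠ 0 := Nat.cast_ne_zero.mpr k.factorial_ne_zero
  have hnif : (((n-i).factorial : ℝ)) ≠ 0 := Nat.cast_ne_zero.mpr (n-i).factorial_ne_zero
  have h5 : ((k + (n-i)).factorial : ℝ) = (((n-i) + k).factorial : ℝ) := by rw [Nat.add_comm]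
  field_simp
  rw [h1, h4]
  -- goal: polynomial identity
  have h2' : poch ((n:ℝ) - i + 1) k = (((n-i) + k).factorial : ℝ) / ((n-i).factorial : ℝ) := by
    field_simp [← h2]
    rw [← h2]; ring
  have h3' : (∏ m ∈ range (n - i), ((k : ℝ) + m + 1)) = ((k + (n-i)).factorial : ℝ) / (k.factorial : ℝ) := by
    field_simp [← h3]
    rw [← h3]; ring
  rw [h2', h3', h5]
  field_simp

noncomputable def cc (n i : ℕ) : ℝ :=
  (-1) ^ n * Real.sqrt (2 * (n : ℝ) - 2 * i + 1) / poch (-(n : ℝ)) i /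
    (((n - i).factorial : ℝ))

noncomputable def Rpol (n i : ℕ) : ℝ[X] :=
  (∏ m ∈ range (n - i), (X + C ((m : ℝ) + 1))) *
  (∏ m ∈ range ((i + 1) / 2), (X + C ((n : ℝ) + 1 - 2 * m))) *
  (∏ m ∈ range ((i - 1) / 2), (C ((n : ℝ) - 1 - 2 * m) - X))

lemma ndCsubX (a : ℝ) : (C a - X).natDegree = 1 := by
  rw [show C a - X = -(X - C a) by ring, natDegree_neg, natDegree_X_sub_C]

lemma CsubX_ne (a : ℝ) : C a - X ≠ 0 := by
  intro h
  have := ndCsubX a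
  rw [h] at this
  simp at this

lemma Rpol_eval (n i : ℕ) (x : ℝ) :
    (Rpol n i).eval x = (∏ m ∈ range (n - i), (x + ((m : ℝ) + 1))) *
      (∏ m ∈ range ((i + 1) / 2), (x + ((n : ℝ) + 1 - 2 * m))) *
      (∏ m ∈ range ((i - 1) / 2), (((n : ℝ) - 1 - 2 * m) - x)) := by
  simp [Rpol, eval_prod]

lemma Rpol_ne_zero (n i : ℕ) : Rpol n i ≠ 0 := by
  exact mul_ne_zero (mul_ne_zero
    (Finset.prod_ne_zero_iff.mpr fun m _ => X_add_C_ne_zero _)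
    (Finset.prod_ne_zero_iff.mpr fun m _ => X_add_C_ne_zero _))
    (Finset.prod_ne_zero_iff.mpr fun m _ => CsubX_ne _)

lemma Rpol_natDegree (n i : ℕ) (hodd : Odd i) (hin : i ≤ n) : (Rpol n i).natDegree = n := by
  have d1 : (∏ m ∈ range (n - i), (X + C ((m : ℝ) + 1))).natDegree = n - i := by
    rw [natDegree_prod _ _ (fun m _ => X_add_C_ne_zero _),
      Finset.sum_congr rfl (fun m _ => natDegree_X_add_C _)]
    simp
  have d2 : (∏ m ∈ range ((i+1)/2), (X + C ((n : ℝ) + 1 - 2 * m))).natDegree = (i+1)/2 := by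
    rw [natDegree_prod _ _ (fun m _ => X_add_C_ne_zero _),
      Finset.sum_congr rfl (fun m _ => natDegree_X_add_C _)]
    simp
  have d3 : (∏ m ∈ range ((i-1)/2), (C ((n : ℝ) - 1 - 2 * m) - X)).natDegree = (i-1)/2 := by
    rw [natDegree_prod _ _ (fun m _ => CsubX_ne _),
      Finset.sum_congr rfl (fun m _ => ndCsubX _)]
    simp
  have ne1 : (∏ m ∈ range (n - i), (X + C ((m : ℝ) + 1))) ≠ 0 :=
    Finset.prod_ne_zero_iff.mpr fun m _ => X_add_C_ne_zero _
  have ne2 : (∏ m ∈ range ((i+1)/2), (X + C ((n : ℝ) + 1 - 2 * m))) ≠ 0 :=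
    Finset.prod_ne_zero_iff.mpr fun m _ => X_add_C_ne_zero _
  have ne3 : (∏ m ∈ range ((i-1)/2), (C ((n : ℝ) - 1 - 2 * m) - X)) ≠ 0 :=
    Finset.prod_ne_zero_iff.mpr fun m _ => CsubX_ne _
  rw [Rpol, natDegree_mul (mul_ne_zero ne1 ne2) ne3, natDegree_mul ne1 ne2, d1, d2, d3]
  obtain ⟨t, rfl⟩ := hodd
  omega

lemma d_eq (n i k : ℕ) (hkn : k ≤ n) (hin : i ≤ n) :
    d n i k = cc n i * ((-1 : ℝ)^k * (n.choose k : ℝ)) * (Rpol n i).eval (k : ℝ) := by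
  rw [d, helper1 n i k hkn hin, Rpol_eval, cc]
  rw [Finset.prod_congr rfl
      (fun m (_ : m ∈ range ((i+1)/2)) => show ((n:ℝ) + k + 1 - 2*m) = ((k:ℝ) + ((n:ℝ)+1-2*m)) by ring),
    Finset.prod_congr rfl
      (fun m (_ : m ∈ range ((i-1)/2)) => show ((n:ℝ) - k - 1 - 2*m) = (((n:ℝ)-1-2*m) - (k:ℝ)) by ring),
    Finset.prod_congr rfl
      (fun m (_ : m ∈ range (n-i)) => show ((k:ℝ) + m + 1) = ((k:ℝ) + ((m:ℝ)+1)) by ring)]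
  ring

lemma Rpol_root (n i s : ℕ) (hodd : Odd i) (hsn : s ≤ n)
    (hcond : s + i < n ∨ (n - s ≤ i ∧ Even (n - s))) :
    (Rpol n i).IsRoot (-((s : ℝ) + 1)) := by
  rw [IsRoot, Rpol_eval]
  rcases hcond with hc | ⟨h1, h2⟩
  · apply mul_eq_zero_of_left
    apply mul_eq_zero_of_left
    exact Finset.prod_eq_zero (Finset.mem_range.mpr (by omega : s < n - i)) (by push_cast; ring)
  · apply mul_eq_zero_of_left
    apply mul_eq_zero_of_right
    refine Finset.prod_eq_zero (i := (n - s) / 2) (Finset.mem_range.mpr ?_) ?_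
    · obtain ⟨t, ht⟩ := hodd
      obtain ⟨u, hu⟩ := h2
      omega
    · have h3 : 2 * ((n - s) / 2) = n - s := Nat.mul_div_cancel' h2.two_dvd
      have h4 : (2 : ℝ) * (((n - s) / 2 : ℕ) : ℝ) = (n : ℝ) - s := by
        rw [show (2:ℝ) * (((n - s) / 2 : ℕ) : ℝ) = ((2 * ((n-s)/2) : ℕ) : ℝ) by push_cast; ring,
          h3, Nat.cast_sub hsn]
      rw [show -((s:ℝ)+1) + ((n:ℝ) + 1 - 2 * (((n - s) / 2 : ℕ) : ℝ))
          = (n:ℝ) - s - 2 * (((n - s) / 2 : ℕ) : ℝ) by ring, h4]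
      ring

lemma moment (n i s : ℕ) (hodd : Odd i) (hin : i ≤ n) (hsn : s ≤ n)
    (hcond : s + i < n ∨ (n - s ≤ i ∧ Even (n - s))) :
    ∑ k ∈ range (n + 1), d n i k / ((k : ℝ) + s + 1) = 0 := by
  obtain ⟨A, hA⟩ := dvd_iff_isRoot.mpr (Rpol_root n i s hodd hsn hcond)
  have hAne : A ≠ 0 := by
    intro hh
    exact Rpol_ne_zero n i (by rw [hA, hh, mul_zero])
  have hAdeg : A.natDegree < n := by
    have hd := Rpol_natDegree n i hodd hin
    rw [hA, natDegree_mul (X_sub_C_ne_zero _) hAne, natDegree_X_sub_C] at hd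
    omega
  have step : ∀ k ∈ range (n + 1),
      d n i k / ((k : ℝ) + s + 1)
        = cc n i * ((-1 : ℝ)^k * (n.choose k : ℝ) * A.eval (k : ℝ)) := by
    intro k hk
    rw [d_eq n i k (by simpa using Nat.lt_succ_iff.mp (Finset.mem_range.mp hk)) hin, hA]
    have hne : (k : ℝ) + s + 1 ≠ 0 := by positivity
    rw [eval_mul, eval_sub, eval_X, eval_C]
    field_simp
    ring
  rw [Finset.sum_congr rfl step, ← Finset.mul_sum, altsum n A hAdeg, mul_zero]

lemma d_zero (n j l : ℕ) (hl : l ≤ n) (hodd : Odd (n - l)) (hle : n - l + 2 ≤ j) :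
    d n j l = 0 := by
  rw [d]
  apply mul_eq_zero_of_right
  obtain ⟨t, ht⟩ := hodd
  refine Finset.prod_eq_zero (i := (n - l - 1) / 2)
    (Finset.mem_range.mpr (show (n - l - 1)/2 < (j-1)/2 by omega)) ?_
  have h3 : 2 * ((n - l - 1) / 2) = n - l - 1 := by omega
  have e : ((n - l - 1 : ℕ) : ℝ) = (n : ℝ) - l - 1 := by
    rw [Nat.cast_sub (by omega : 1 ≤ n - l), Nat.cast_sub hl, Nat.cast_one]
  have h4 : (2 : ℝ) * (((n - l - 1) / 2 : ℕ) : ℝ) = (n : ℝ) - l - 1 := by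
    rw [show (2:ℝ) * (((n - l - 1) / 2 : ℕ) : ℝ) = ((2 * ((n-l-1)/2) : ℕ) : ℝ) by push_cast; ring,
      h3, e]
  rw [show (n:ℝ) - l - 1 - 2 * (((n - l - 1) / 2 : ℕ) : ℝ)
      = ((n:ℝ) - l - 1) - 2 * (((n - l - 1) / 2 : ℕ) : ℝ) by ring, ← h4]
  ring


end Aux

theorem stmt_8 (n i j : ℕ) (hoddi : Odd i) (hoddj : Odd j) (hi : 0 < i)
    (hij : i < j) (hjn : j ≤ n) :
    ∫ t in (0:ℝ)..1, h n i t * h n j t = 0 := by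
  have hin : i ≤ n := le_trans (le_of_lt hij) hjn
  have hexp : (fun t : ℝ => h n i t * h n j t)
      = fun t => ∑ k ∈ range (n+1), ∑ l ∈ range (n+1), d n i k * d n j l * t ^ (k + l) := by
    funext t
    rw [h, h, Finset.sum_mul_sum]
    refine Finset.sum_congr rfl fun k _ => Finset.sum_congr rfl fun l _ => ?_
    rw [pow_add]; ring
  rw [hexp]
  rw [intervalIntegral.integral_finset_sum]
  swap
  · intro k _
    exact (continuous_finset_sum _ fun l _ =>
      (continuous_const.mul (continuous_pow _))).intervalIntegrable _ _
  have : ∀ k ∈ range (n+1),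
      (∫ t in (0:ℝ)..1, ∑ l ∈ range (n+1), d n i k * d n j l * t ^ (k + l))
        = ∑ l ∈ range (n+1), d n i k * d n j l / ((k : ℝ) + l + 1) := by
    intro k _
    rw [intervalIntegral.integral_finset_sum]
    swap
    · intro l _
      exact (continuous_const.mul (continuous_pow _)).intervalIntegrable _ _
    refine Finset.sum_congr rfl fun l _ => ?_
    rw [intervalIntegral.integral_const_mul, integral_pow]
    push_cast
    ring
  rw [Finset.sum_congr rfl this, Finset.sum_comm]
  refine Finset.sum_eq_zero fun l hl => ?_
  have hln : l ≤ n := Nat.lt_succ_iff.mp (Finset.mem_range.mp hl)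
  rcases Nat.lt_or_ge (l + i) n with hcase | hcase
  · -- moment, low power
    have : ∀ k ∈ range (n+1), d n i k * d n j l / ((k : ℝ) + l + 1)
        = d n j l * (d n i k / ((k : ℝ) + l + 1)) := fun k _ => by ring
    rw [Finset.sum_congr rfl this, ← Finset.mul_sum,
      moment n i l hoddi hin hln (Or.inl hcase), mul_zero]
  · rcases Nat.even_or_odd (n - l) with hpar | hpar
    · have : ∀ k ∈ range (n+1), d n i k * d n j l / ((k : ℝ) + l + 1)
          = d n j l * (d n i k / ((k : ℝ) + l + 1)) := fun k _ => by ring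
      rw [Finset.sum_congr rfl this, ← Finset.mul_sum,
        moment n i l hoddi hin hln (Or.inr ⟨by omega, hpar⟩), mul_zero]
    · have hdz : d n j l = 0 := by
        apply d_zero n j l hln hpar
        obtain ⟨t, ht⟩ := hoddi
        obtain ⟨u, hu⟩ := hoddj
        omega
      refine Finset.sum_eq_zero fun k _ => ?_
      rw [hdz]
      ring
end
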